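/- Let λ ∈ Y^{++} and β^∨ ∈ Φ^∨₊ a positive coroot, and let u ∈ Wᵛ be such that u⁻¹(λ+β^∨) ∈ Y^{++} (i.e. λ+β^∨ belongs to the vectorial chamber of u). Then ℓ(s_β u) = ℓ(s_β) + ℓ(u). -/

import Mathlib

/-- Sign of an integer, with the convention `isgn 0 = 1`. -/
def isgn (n : ℤ) : ℤ := if 0 ≤ n then 1 else -1

/-- The multiplicative group structure on `AddAut A` that older Mathlib provided
(`g * h = h.trans g`, `1 = refl`, `g⁻¹ = g.symm`); current Mathlib makes `AddAut A` an
additive group instead. -/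
instance AddAut.oldMulGroup (A : Type*) [Add A] : Group (AddAut A) where
  mul g h := AddEquiv.trans h g
  one := AddEquiv.refl _
  inv := AddEquiv.symm
  mul_assoc _ _ _ := rfl
  one_mul _ := rfl
  mul_one _ := rfl
  inv_mul_cancel := AddEquiv.self_trans_symm

/-- A Kac–Moody root datum: a finite index set `I`, a generalized Cartan matrix `A`,
free `ℤ`-modules `X` and `Y` of finite rank in perfect duality `pairE`, and linearly
independent families of simple roots `α` and simple coroots `αv` with
`⟨αv i, α j⟩ = A i j`. -/
structure KM (I X Y : Type*) [Fintype I] [AddCommGroup X] [AddCommGroup Y] where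
  A : I → I → ℤ
  pairE : Y ≃+ (X →+ ℤ)
  α : I → X
  αv : I → Y
  pair_av_a : ∀ i j, pairE (αv i) (α j) = A i j
  A_diag : ∀ i, A i i = 2
  A_offdiag : ∀ i j, i ≠ j → A i j ≤ 0
  A_zero_iff : ∀ i j, A i j = 0 → A j i = 0
  freeX : Module.Free ℤ X
  freeY : Module.Free ℤ Y
  finX : Module.Finite ℤ X
  finY : Module.Finite ℤ Y
  indep_α : LinearIndependent ℤ α
  indep_αv : LinearIndependent ℤ αv

namespace KM

variable {I X Y : Type*} [Fintype I] [AddCommGroup X] [AddCommGroup Y] (D : KM I X Y)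

open scoped Classical

/-- The duality pairing `⟨y, x⟩`. -/
def pr (y : Y) (x : X) : ℤ := D.pairE y x

/-- Underlying function of the simple reflection `s_i` on `X`. -/
def sXfun (i : I) (x : X) : X := x - D.pr (D.αv i) x • D.α i

lemma sX_invol (i : I) : Function.Involutive (D.sXfun i) := by
  intro x
  have h2 : D.pairE (D.αv i) (D.α i) = 2 := by rw [D.pair_av_a, D.A_diag]
  show (x - D.pairE (D.αv i) x • D.α i) -
      D.pairE (D.αv i) (x - D.pairE (D.αv i) x • D.α i) • D.α i = x
  rw [map_sub, map_zsmul, h2, smul_eq_mul]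
  have h : D.pairE (D.αv i) x - D.pairE (D.αv i) x * 2 = -(D.pairE (D.αv i) x) := by ring
  rw [h, neg_smul]
  abel

/-- The simple reflection `s_i : x ↦ x - ⟨αv i, x⟩ • α i` as an automorphism of `X`. -/
def sX (i : I) : AddAut X :=
  AddEquiv.mk' (D.sX_invol i).toPerm (by
    intro x y
    show ((x + y) - D.pairE (D.αv i) (x + y) • D.α i)
        = (x - D.pairE (D.αv i) x • D.α i) + (y - D.pairE (D.αv i) y • D.α i)
    rw [map_add, add_smul]
    abel)

/-- The vectorial Weyl group `Wᵛ`, as the subgroup of `AddAut X` generated by the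
simple reflections. -/
def Wg : Subgroup (AddAut X) := Subgroup.closure (Set.range D.sX)

/-- The contragredient action of an automorphism `f` of `X` on `Y`; it is characterized by
`⟨actY f y, x⟩ = ⟨y, f⁻¹ x⟩`. -/
def actY (f : AddAut X) (y : Y) : Y :=
  D.pairE.symm ((D.pairE y).comp (AddEquiv.toAddMonoidHom (AddEquiv.symm f)))

/-- The set of real roots `Φ = Wᵛ · {α i}`. -/
def Phi : Set X := {x | ∃ p : AddAut X × I, p.1 ∈ D.Wg ∧ x = p.1 (D.α p.2)}

/-- The set of positive real roots `Φ₊`. -/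
def PhiPos : Set X := {x | x ∈ D.Phi ∧ ∃ c : I → ℕ, x = ∑ i, (c i : ℤ) • D.α i}

/-- The set of negative real roots `Φ₋ = -Φ₊`. -/
def PhiNeg : Set X := {x | -x ∈ D.PhiPos}

/-- The coroot `β^∨` of a real root `β`: if `β = w (α i)` then `β^∨ = w (αv i)`
(this is independent of the chosen expression). -/
noncomputable def coroot (x : X) : Y :=
  if h : ∃ p : AddAut X × I, p.1 ∈ D.Wg ∧ x = p.1 (D.α p.2) then
    D.actY h.choose.1 (D.αv h.choose.2)
  else 0

/-- The reflection `s_β` associated to a real root `β`: if `β = w (α i)` then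
`s_β = w s_i w⁻¹` (independent of the chosen expression). -/
noncomputable def srefl (x : X) : AddAut X :=
  if h : ∃ p : AddAut X × I, p.1 ∈ D.Wg ∧ x = p.1 (D.α p.2) then
    h.choose.1 * D.sX h.choose.2 * h.choose.1⁻¹
  else 1

/-- The integral fundamental chamber `Y^{++}` of dominant coweights. -/
def Ypp : Set Y := {y | ∀ i, 0 ≤ D.pr y (D.α i)}

/-- The integral Tits cone `Y⁺ = Wᵛ · Y^{++}`. -/
def Yplus : Set Y := {y | ∃ p : AddAut X × Y, p.1 ∈ D.Wg ∧ p.2 ∈ D.Ypp ∧ y = D.actY p.1 p.2}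

/-- The dominant representative `λ^{++}` of `λ ∈ Y⁺` (the unique dominant element of the
orbit `Wᵛ · λ`). -/
noncomputable def dompp (y : Y) : Y :=
  if h : ∃ p : AddAut X × Y, p.1 ∈ D.Wg ∧ p.2 ∈ D.Ypp ∧ y = D.actY p.1 p.2 then
    h.choose.2
  else y

/-- The inversion set `Inv(w) = {α ∈ Φ₊ | w α ∈ Φ₋}`. -/
def invSet (w : AddAut X) : Set X := {a | a ∈ D.PhiPos ∧ w a ∈ D.PhiNeg}

/-- The Bruhat length `ℓ(w) = |Inv(w)|`. -/
noncomputable def len (w : AddAut X) : ℕ := (D.invSet w).ncard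

/-- The relative length `ℓ_v(w) = |Inv(w⁻¹)∖Inv(v⁻¹)| − |Inv(w⁻¹)∩Inv(v⁻¹)|`. -/
noncomputable def rlen (v w : AddAut X) : ℤ :=
  ((D.invSet w⁻¹ \ D.invSet v⁻¹).ncard : ℤ) - ((D.invSet w⁻¹ ∩ D.invSet v⁻¹).ncard : ℤ)

/-- `v^λ`: the minimal-length element of `Wᵛ` sending `λ^{++}` to `λ`. -/
noncomputable def vmin (l : Y) : AddAut X :=
  if h : ∃ w : AddAut X, w ∈ D.Wg ∧ D.actY w (D.dompp l) = l ∧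
      ∀ w' : AddAut X, w' ∈ D.Wg → D.actY w' (D.dompp l) = l → D.len w ≤ D.len w'
  then h.choose else 1

/-- The set of reflections of `Wᵛ`. -/
def reflections : Set (AddAut X) := {r | ∃ b ∈ D.PhiPos, r = D.srefl b}

/-- One step of the Bruhat order on `Wᵛ`. -/
def vectStep (u u' : AddAut X) : Prop :=
  ∃ r ∈ D.reflections, u' = u * r ∧ D.len u < D.len u'

/-- The Bruhat order on `Wᵛ`. -/
def vlt : AddAut X → AddAut X → Prop := Relation.TransGen D.vectStep

/-- One step of the relative Bruhat order `<_v` on `Wᵛ`. -/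
def rvStep (v u u' : AddAut X) : Prop :=
  ∃ r ∈ D.reflections, u' = u * r ∧ D.rlen v u < D.rlen v u'

/-- The relative Bruhat order `<_v` on `Wᵛ`. -/
def rvlt (v : AddAut X) : AddAut X → AddAut X → Prop := Relation.TransGen (D.rvStep v)

/-- The stabilizer `W_λ` of `λ` in `Wᵛ`. -/
def Wstab (l : Y) : Set (AddAut X) := {u | u ∈ D.Wg ∧ D.actY u l = l}

/-- `v` is the minimal-length representative of its coset `v W_λ`. -/
def IsMinRep (l : Y) (v : AddAut X) : Prop :=
  v ∈ D.Wg ∧ ∀ u ∈ D.Wstab l, D.len v ≤ D.len (v * u)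

/-- The action of `π^λ w ∈ Y ⋊ Wᵛ` on affine roots:
`π^λ w (β + nπ) = w β + (n + ⟨λ, w β⟩)π`. -/
def affAct (a : Y × AddAut X) (r : X × ℤ) : X × ℤ :=
  (a.2 r.1, r.2 + D.pr a.1 (a.2 r.1))

/-- The set `Φᵃ₊` of positive affine roots. -/
def PhiAffPos : Set (X × ℤ) :=
  {r | r.1 ∈ D.Phi ∧ (0 < r.2 ∨ (r.2 = 0 ∧ r.1 ∈ D.PhiPos))}

/-- The affine root `β[n] = sgn(n)β + |n|π`. -/
def aroot (b : X) (n : ℤ) : X × ℤ := (isgn n • b, |n|)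

/-- The affine reflection `s_{β[n]} = π^{nβ^∨} s_β`, as an element of `Y ⋊ Wᵛ`. -/
noncomputable def saff (b : X) (n : ℤ) : Y × AddAut X := (n • D.coroot b, D.srefl b)

/-- Multiplication in the semidirect product `Y ⋊ Wᵛ`:
`π^λ w · π^μ v = π^{λ + w μ} (w v)`. -/
def mulA (a b : Y × AddAut X) : Y × AddAut X := (a.1 + D.actY a.2 b.1, a.2 * b.2)

/-- One step `x < x·s_{β[n]}` of the affine Bruhat order on `W⁺`, for `β ∈ Φ₊`, `n ∈ ℤ`,
requiring both elements to lie in `W⁺` and `x(β[n]) ∈ Φᵃ₊`. -/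
def astep (a b : Y × AddAut X) : Prop :=
  a.1 ∈ D.Yplus ∧ b.1 ∈ D.Yplus ∧ a.2 ∈ D.Wg ∧ b.2 ∈ D.Wg ∧
    ∃ g ∈ D.PhiPos, ∃ m : ℤ,
      D.affAct a (aroot (X := X) g m) ∈ D.PhiAffPos ∧ b = D.mulA a (D.saff g m)

/-- The (strict) affine Bruhat order on `W⁺`. -/
def alt : (Y × AddAut X) → (Y × AddAut X) → Prop := Relation.TransGen D.astep

/-- The affine Bruhat order on `W⁺`. -/
def ale (a b : Y × AddAut X) : Prop := a = b ∨ D.alt a b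

/-- `b` covers `a` for the affine Bruhat order: `a < b` and nothing lies strictly
between them. -/
def acovers (a b : Y × AddAut X) : Prop :=
  D.alt a b ∧ ∀ c, D.alt a c → D.alt c b → False

/-- `Λ` is a family of fundamental weights: `⟨αv i, Λ j⟩ = δ_{ij}`. -/
def IsFundWeights (Λ : I → X) : Prop :=
  ∀ i j, D.pr (D.αv i) (Λ j) = if i = j then 1 else 0

/-- The height `ht(λ) = ⟨λ, ρ⟩` where `ρ = Σ_i Λ_i`. -/
def ht (Λ : I → X) (l : Y) : ℤ := D.pr l (∑ i, Λ i)

/-- The affine length `ℓᵃ` with integral values. -/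
noncomputable def alen (Λ : I → X) (a : Y × AddAut X) : ℤ :=
  2 * D.ht Λ (D.dompp a.1) +
    ((({x | x ∈ D.invSet a.2⁻¹ ∧ 0 ≤ D.pr a.1 x}).ncard : ℤ) -
      (({x | x ∈ D.invSet a.2⁻¹ ∧ D.pr a.1 x < 0}).ncard : ℤ))

end KM

@[simp] lemma AddAut.oldMul_apply {A : Type*} [Add A] (e f : AddAut A) (a : A) :
    (e * f) a = e (f a) := rfl

@[simp] lemma AddAut.oldOne_apply {A : Type*} [Add A] (a : A) : (1 : AddAut A) a = a := rfl

@[simp] lemma AddAut.oldInv_apply_self {A : Type*} [Add A] (e : AddAut A) (a : A) :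
    e (e⁻¹ a) = a := e.apply_symm_apply a

@[simp] lemma AddAut.oldApply_inv_self {A : Type*} [Add A] (e : AddAut A) (a : A) :
    e⁻¹ (e a) = a := e.symm_apply_apply a


namespace KM

variable {I X Y : Type*} [Fintype I] [AddCommGroup X] [AddCommGroup Y] (D : KM I X Y)

open scoped Classical

lemma sX_apply (i : I) (x : X) : D.sX i x = x - D.pr (D.αv i) x • D.α i := rfl

lemma pr_addr (y : Y) (x1 x2 : X) : D.pr y (x1 + x2) = D.pr y x1 + D.pr y x2 :=
  map_add _ _ _

lemma pr_subr (y : Y) (x1 x2 : X) : D.pr y (x1 - x2) = D.pr y x1 - D.pr y x2 :=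
  map_sub _ _ _

lemma pr_negr (y : Y) (x : X) : D.pr y (-x) = -D.pr y x := map_neg _ _

lemma pr_smulr (y : Y) (n : ℤ) (x : X) : D.pr y (n • x) = n * D.pr y x := by
  unfold pr; rw [map_zsmul, smul_eq_mul]

lemma pr_addl (y1 y2 : Y) (x : X) : D.pr (y1 + y2) x = D.pr y1 x + D.pr y2 x := by
  unfold pr; rw [map_add]; rfl

lemma pr_av_a (i j : I) : D.pr (D.αv i) (D.α j) = D.A i j := D.pair_av_a i j

lemma pr_sumr {κ : Type*} (y : Y) (s : Finset κ) (f : κ → X) :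
    D.pr y (∑ t ∈ s, f t) = ∑ t ∈ s, D.pr y (f t) :=
  map_sum _ _ _

/-- words of simple reflections -/
def wp (l : List I) : AddAut X := (l.map D.sX).prod

@[simp] lemma wp_nil : D.wp ([] : List I) = 1 := rfl

@[simp] lemma wp_cons (i : I) (l : List I) : D.wp (i :: l) = D.sX i * D.wp l := by
  simp [wp]

lemma wp_append (l1 l2 : List I) : D.wp (l1 ++ l2) = D.wp l1 * D.wp l2 := by
  simp [wp]

lemma sX_mul_self (i : I) : D.sX i * D.sX i = 1 := by
  ext x
  exact D.sX_invol i x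

lemma sX_inv (i : I) : (D.sX i)⁻¹ = D.sX i :=
  inv_eq_of_mul_eq_one_right (D.sX_mul_self i)

lemma sX_mem (i : I) : D.sX i ∈ D.Wg := Subgroup.subset_closure ⟨i, rfl⟩

lemma wp_mem (l : List I) : D.wp l ∈ D.Wg := by
  induction l with
  | nil => exact one_mem _
  | cons a l ih => rw [wp_cons]; exact mul_mem (D.sX_mem a) ih

lemma wp_reverse (l : List I) : D.wp l.reverse = (D.wp l)⁻¹ := by
  induction l with
  | nil => simp
  | cons a l ih =>
      rw [List.reverse_cons, wp_append, wp_cons, ih]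
      simp [mul_inv_rev, sX_inv]

lemma mem_Wg_iff {w : AddAut X} : w ∈ D.Wg ↔ ∃ l : List I, D.wp l = w := by
  constructor
  · intro hw
    induction hw using Subgroup.closure_induction'' with
    | one => exact ⟨[], rfl⟩
    | mem x hx => obtain ⟨i, rfl⟩ := hx; exact ⟨[i], by simp⟩
    | inv_mem x hx => obtain ⟨i, rfl⟩ := hx; exact ⟨[i], by simp [sX_inv]⟩
    | mul x y _ _ hx hy =>
        obtain ⟨lx, rfl⟩ := hx; obtain ⟨ly, rfl⟩ := hy
        exact ⟨lx ++ ly, D.wp_append lx ly⟩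
  · rintro ⟨l, rfl⟩; exact D.wp_mem l

/-- minimal word length -/
noncomputable def wwl (w : AddAut X) : ℕ :=
  sInf {n | ∃ l : List I, l.length = n ∧ D.wp l = w}

lemma wwl_le {w : AddAut X} {l : List I} (h : D.wp l = w) : D.wwl w ≤ l.length :=
  Nat.sInf_le ⟨l, rfl, h⟩

lemma exists_min_word {w : AddAut X} (hw : w ∈ D.Wg) :
    ∃ l : List I, l.length = D.wwl w ∧ D.wp l = w := by
  obtain ⟨l, hl⟩ := (D.mem_Wg_iff).mp hw
  have : D.wwl w ∈ {n | ∃ l : List I, l.length = n ∧ D.wp l = w} :=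
    Nat.sInf_mem ⟨l.length, l, rfl, hl⟩
  exact this

@[simp] lemma wwl_one : D.wwl (1 : AddAut X) = 0 :=
  Nat.le_zero.mp (D.wwl_le (w := 1) (l := []) rfl)

lemma eq_one_of_wwl_eq_zero {w : AddAut X} (hw : w ∈ D.Wg) (h : D.wwl w = 0) : w = 1 := by
  obtain ⟨l, hl, hwp⟩ := D.exists_min_word hw
  rw [h] at hl
  rw [List.length_eq_zero_iff] at hl
  subst hl; exact hwp.symm

lemma wwl_mul_sX_le {w : AddAut X} (hw : w ∈ D.Wg) (i : I) :
    D.wwl (w * D.sX i) ≤ D.wwl w + 1 := by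
  obtain ⟨l, hl, hwp⟩ := D.exists_min_word hw
  have : D.wp (l ++ [i]) = w * D.sX i := by
    rw [wp_append, hwp]; simp
  calc D.wwl (w * D.sX i) ≤ (l ++ [i]).length := D.wwl_le this
  _ = D.wwl w + 1 := by simp [hl]

lemma wwl_le_mul_sX {w : AddAut X} (hw : w ∈ D.Wg) (i : I) :
    D.wwl w ≤ D.wwl (w * D.sX i) + 1 := by
  have h2 := D.wwl_mul_sX_le (mul_mem hw (D.sX_mem i)) i
  rw [mul_assoc, D.sX_mul_self i, mul_one] at h2
  exact h2

end KM


namespace KM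

variable {I X Y : Type*} [Fintype I] [AddCommGroup X] [AddCommGroup Y] (D : KM I X Y)

open scoped Classical

/-- determinant character -/
noncomputable def eps {X : Type*} [AddCommGroup X] (w : AddAut X) : ℤ :=
  LinearMap.det (AddMonoidHom.toIntLinearMap w.toAddMonoidHom)

lemma eps_mul {X : Type*} [AddCommGroup X] (w v : AddAut X) :
    eps (w * v) = eps w * eps v := by
  unfold eps
  have h : AddMonoidHom.toIntLinearMap (w * v).toAddMonoidHom =
      (AddMonoidHom.toIntLinearMap w.toAddMonoidHom).comp
        (AddMonoidHom.toIntLinearMap v.toAddMonoidHom) := rfl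
  rw [h, LinearMap.det_comp]

@[simp] lemma eps_one {X : Type*} [AddCommGroup X] : eps (1 : AddAut X) = 1 := by
  unfold eps
  have : (AddMonoidHom.toIntLinearMap (1 : AddAut X).toAddMonoidHom) = LinearMap.id := by
    ext x; rfl
  rw [this, LinearMap.det_id]

lemma eps_sX (i : I) : eps (D.sX i) = -1 := by
  classical
  haveI := D.freeX; haveI := D.finX
  set b := Module.Free.chooseBasis ℤ X with hb
  unfold eps
  rw [← LinearMap.det_toMatrix b]
  have h2 : D.pr (D.αv i) (D.α i) = 2 := by rw [D.pr_av_a, D.A_diag]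
  have hM : (LinearMap.toMatrix b b (AddMonoidHom.toIntLinearMap (D.sX i).toAddMonoidHom)) =
      1 + Matrix.replicateCol Unit (fun k => -(b.repr (D.α i) k)) *
        Matrix.replicateRow Unit (fun k => D.pr (D.αv i) (b k)) := by
    ext k l
    rw [LinearMap.toMatrix_apply]
    have : (AddMonoidHom.toIntLinearMap (D.sX i).toAddMonoidHom) (b l)
        = b l - D.pr (D.αv i) (b l) • D.α i := rfl
    rw [this]
    simp [Matrix.mul_apply, Matrix.one_apply, sub_eq_add_neg, mul_comm, Finsupp.single_apply, eq_comm]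
  rw [hM, Matrix.det_one_add_replicateCol_mul_replicateRow]
  have hsum : ∑ k, D.pr (D.αv i) (b k) * (b.repr (D.α i) k) = 2 := by
    have h1 : D.pr (D.αv i) (D.α i) = ∑ k, (b.repr (D.α i) k) * D.pr (D.αv i) (b k) := by
      conv_lhs => rw [← Module.Basis.sum_repr b (D.α i)]
      rw [D.pr_sumr]
      exact Finset.sum_congr rfl fun k _ => D.pr_smulr _ _ _
    rw [← h2, h1]
    exact Finset.sum_congr rfl fun k _ => mul_comm _ _
  rw [dotProduct]
  simp only [mul_neg]
  rw [Finset.sum_neg_distrib, hsum]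
  norm_num

lemma eps_wp (l : List I) : eps (D.wp l) = (-1) ^ l.length := by
  induction l with
  | nil => simpa using eps_one
  | cons a l ih => rw [wp_cons, eps_mul, D.eps_sX, ih, List.length_cons, pow_succ]; ring

lemma eps_eq_pow_wwl {w : AddAut X} (hw : w ∈ D.Wg) : eps w = (-1) ^ D.wwl w := by
  obtain ⟨l, hl, hwp⟩ := D.exists_min_word hw
  rw [← hl, ← hwp, D.eps_wp]

lemma wwl_mul_sX_ne {w : AddAut X} (hw : w ∈ D.Wg) (i : I) :
    D.wwl (w * D.sX i) ≠ D.wwl w := by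
  intro h
  have h1 : eps (w * D.sX i) = -eps w := by rw [eps_mul, D.eps_sX]; ring
  rw [D.eps_eq_pow_wwl (mul_mem hw (D.sX_mem i)), D.eps_eq_pow_wwl hw, h] at h1
  have h2 : ((-1 : ℤ)) ^ D.wwl w ≠ 0 := pow_ne_zero _ (by norm_num)
  exact h2 (by linarith)

end KM


namespace KM

variable {I X Y : Type*} [Fintype I] [AddCommGroup X] [AddCommGroup Y] (D : KM I X Y)

open scoped Classical

lemma coeff_eq {c d : I → ℤ} (h : ∑ t, c t • D.α t = ∑ t, d t • D.α t) : c = d := by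
  have h0 : ∑ t, (c t - d t) • D.α t = 0 := by
    simp only [sub_smul, Finset.sum_sub_distrib, h, sub_self]
  funext t
  have := Fintype.linearIndependent_iff.mp D.indep_α (fun t => c t - d t) h0 t
  omega

lemma wp_span (l : List I) (d : I → ℤ) :
    ∃ d' : I → ℤ, D.wp l (∑ t, d t • D.α t) = ∑ t, d' t • D.α t := by
  induction l with
  | nil => exact ⟨d, by simp⟩
  | cons a l ih =>
    obtain ⟨d', hd⟩ := ih
    refine ⟨fun t => d' t - (if t = a then (∑ s, d' s * D.A a s) else 0), ?_⟩
    rw [wp_cons, AddAut.oldMul_apply, hd, sX_apply]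
    have hpr : D.pr (D.αv a) (∑ t, d' t • D.α t) = ∑ s, d' s * D.A a s := by
      rw [D.pr_sumr]
      exact Finset.sum_congr rfl fun s _ => by rw [D.pr_smulr, D.pr_av_a]
    rw [hpr]
    have hite : ∑ t, (if t = a then (∑ s, d' s * D.A a s) else 0) • D.α t
        = (∑ s, d' s * D.A a s) • D.α a := by
      simp [ite_smul]
    conv_rhs => simp only [sub_smul]
    rw [Finset.sum_sub_distrib, hite]

lemma mem_Phi_iff {x : X} : x ∈ D.Phi ↔ ∃ w ∈ D.Wg, ∃ t, x = w (D.α t) := by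
  constructor
  · rintro ⟨⟨w, t⟩, hw, rfl⟩; exact ⟨w, hw, t, rfl⟩
  · rintro ⟨w, hw, t, rfl⟩; exact ⟨(w, t), hw, rfl⟩

lemma alpha_mem_Phi (t : I) : D.α t ∈ D.Phi :=
  D.mem_Phi_iff.mpr ⟨1, one_mem _, t, rfl⟩

lemma Phi_coords {x : X} (h : x ∈ D.Phi) : ∃ d : I → ℤ, x = ∑ t, d t • D.α t := by
  obtain ⟨w, hw, t, rfl⟩ := D.mem_Phi_iff.mp h
  obtain ⟨l, hl⟩ := D.mem_Wg_iff.mp hw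
  have ha : D.α t = ∑ s, (if s = t then (1 : ℤ) else 0) • D.α s := by
    simp [ite_smul]
  obtain ⟨d', hd'⟩ := D.wp_span l (fun s => if s = t then (1 : ℤ) else 0)
  exact ⟨d', by rw [ha, ← hl, hd']⟩

lemma zero_not_mem_Phi : (0 : X) ∉ D.Phi := by
  intro h
  obtain ⟨w, hw, t, h0⟩ := D.mem_Phi_iff.mp h
  have : D.α t = 0 := by
    have := congrArg (fun z => w⁻¹ z) h0
    simpa using this.symm
  exact D.indep_α.ne_zero t this

lemma sX_alpha_self (t : I) : D.sX t (D.α t) = -(D.α t) := by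
  rw [sX_apply, pr_av_a, D.A_diag]
  have : (2 : ℤ) • D.α t = D.α t + D.α t := two_zsmul _
  rw [this]; abel

lemma Phi_w {w : AddAut X} {x : X} (hw : w ∈ D.Wg) (h : x ∈ D.Phi) : w x ∈ D.Phi := by
  obtain ⟨w1, hw1, t, rfl⟩ := D.mem_Phi_iff.mp h
  exact D.mem_Phi_iff.mpr ⟨w * w1, mul_mem hw hw1, t, by rw [AddAut.oldMul_apply]⟩

lemma Phi_neg {x : X} (h : x ∈ D.Phi) : -x ∈ D.Phi := by
  obtain ⟨w, hw, t, rfl⟩ := D.mem_Phi_iff.mp h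
  refine D.mem_Phi_iff.mpr ⟨w * D.sX t, mul_mem hw (D.sX_mem t), t, ?_⟩
  rw [AddAut.oldMul_apply, D.sX_alpha_self, map_neg]

lemma mem_PhiPos_iff {x : X} : x ∈ D.PhiPos ↔
    x ∈ D.Phi ∧ ∃ d : I → ℤ, (∀ t, 0 ≤ d t) ∧ x = ∑ t, d t • D.α t := by
  constructor
  · rintro ⟨h1, c, rfl⟩
    exact ⟨h1, fun t => (c t : ℤ), fun t => Int.natCast_nonneg _, rfl⟩
  · rintro ⟨h1, d, hd, rfl⟩
    refine ⟨h1, fun t => (d t).toNat, ?_⟩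
    exact Finset.sum_congr rfl fun t _ => by rw [Int.toNat_of_nonneg (hd t)]

lemma mem_PhiNeg_iff {x : X} : x ∈ D.PhiNeg ↔ -x ∈ D.PhiPos := Iff.rfl

lemma alpha_mem_PhiPos (t : I) : D.α t ∈ D.PhiPos := by
  refine D.mem_PhiPos_iff.mpr ⟨D.alpha_mem_Phi t, fun s => if s = t then 1 else 0,
    fun s => by positivity, ?_⟩
  simp [ite_smul]

lemma not_pos_and_neg {x : X} (h1 : x ∈ D.PhiPos) (h2 : x ∈ D.PhiNeg) : False := by
  obtain ⟨hp, d, hd, hx⟩ := D.mem_PhiPos_iff.mp h1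
  obtain ⟨hn, e, he, hnx⟩ := D.mem_PhiPos_iff.mp h2
  have hsum : ∑ t, (d t + e t) • D.α t = ∑ t, (0 : ℤ) • D.α t := by
    simp only [add_smul, Finset.sum_add_distrib, ← hx, ← hnx]
    simp
  have hde := D.coeff_eq hsum
  have hd0 : ∀ t, d t = 0 := fun t => by
    have := congrFun hde t; linarith [hd t, he t]
  have hx0 : x = 0 := by rw [hx]; exact Finset.sum_eq_zero fun t _ => by rw [hd0 t, zero_smul]
  exact D.zero_not_mem_Phi (hx0 ▸ hp)

lemma pr_nonneg_of_pos {lam : Y} (hl : lam ∈ D.Ypp) {g : X} (hg : g ∈ D.PhiPos) :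
    0 ≤ D.pr lam g := by
  obtain ⟨_, d, hd, rfl⟩ := D.mem_PhiPos_iff.mp hg
  rw [D.pr_sumr]
  refine Finset.sum_nonneg fun t _ => ?_
  rw [D.pr_smulr]
  exact mul_nonneg (hd t) (hl t)

lemma pr_nonpos_of_neg {lam : Y} (hl : lam ∈ D.Ypp) {g : X} (hg : g ∈ D.PhiNeg) :
    D.pr lam g ≤ 0 := by
  have := D.pr_nonneg_of_pos hl (D.mem_PhiNeg_iff.mp hg)
  rw [D.pr_negr] at this
  linarith

end KM


/-- letters of the alternating word -/
def bletter (k : ℕ) : Bool := decide (k % 2 = 1)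

/-- alternating `Bool`-word of length `k` whose rightmost letter is `false` -/
def baw : ℕ → List Bool
  | 0 => []
  | (k+1) => bletter k :: baw k

@[simp] lemma baw_length (k : ℕ) : (baw k).length = k := by
  induction k with
  | zero => rfl
  | succ k ih => simp [baw, ih]

def bI {I : Type*} (i j : I) (b : Bool) : I := bif b then i else j

@[simp] lemma bI_true {I : Type*} (i j : I) : bI i j true = i := rfl
@[simp] lemma bI_false {I : Type*} (i j : I) : bI i j false = j := rfl

/-- 2x2 matrices as quadruples -/
abbrev Q4 := (ℤ × ℤ) × (ℤ × ℤ)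

def qmul (P R : Q4) : Q4 :=
  ((P.1.1*R.1.1 + P.1.2*R.2.1, P.1.1*R.1.2 + P.1.2*R.2.2),
   (P.2.1*R.1.1 + P.2.2*R.2.1, P.2.1*R.1.2 + P.2.2*R.2.2))

def qcmp (A1 A2 : ℤ) (M N : Q4) : Q4 := N + M + qmul (qmul M ((2, A1),(A2,2))) N

def Fm (A1 A2 : ℤ) : List Bool → Q4
  | [] => ((0,0),(0,0))
  | (t :: l) => qcmp A1 A2 (if t then ((-1,0),(0,0)) else ((0,0),(0,-1))) (Fm A1 A2 l)

/-- coordinates of the root sequence -/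
def crd (A1 A2 : ℤ) : ℕ → ℤ × ℤ
  | 0 => (1, 0)
  | (k+1) =>
      if k % 2 = 0 then ((crd A1 A2 k).1, -(crd A1 A2 k).2 - A2 * (crd A1 A2 k).1)
      else (-(crd A1 A2 k).1 - A1 * (crd A1 A2 k).2, (crd A1 A2 k).2)

namespace KM

variable {I X Y : Type*} [Fintype I] [AddCommGroup X] [AddCommGroup Y] (D : KM I X Y)

open scoped Classical

/-- dihedral words -/
def dW (i j : I) (m : List Bool) : AddAut X := D.wp (m.map (bI i j))

@[simp] lemma dW_nil (i j : I) : D.dW i j [] = 1 := rfl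

lemma dW_cons (i j : I) (t : Bool) (m : List Bool) :
    D.dW i j (t :: m) = D.sX (bI i j t) * D.dW i j m := by
  simp [dW]

lemma dW_append (i j : I) (m1 m2 : List Bool) :
    D.dW i j (m1 ++ m2) = D.dW i j m1 * D.dW i j m2 := by
  unfold dW
  rw [List.map_append, wp_append]

lemma dW_mem (i j : I) (m : List Bool) : D.dW i j m ∈ D.Wg := D.wp_mem _

noncomputable def dlen (i j : I) (u : AddAut X) : ℕ :=
  sInf {n | ∃ m : List Bool, m.length = n ∧ D.dW i j m = u}

lemma dlen_le {i j : I} {u : AddAut X} {m : List Bool} (h : D.dW i j m = u) :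
    D.dlen i j u ≤ m.length := Nat.sInf_le ⟨m, rfl, h⟩

lemma exists_min_bword {i j : I} {u : AddAut X} (m0 : List Bool) (h : D.dW i j m0 = u) :
    ∃ m : List Bool, m.length = D.dlen i j u ∧ D.dW i j m = u := by
  have hne : {n | ∃ m : List Bool, m.length = n ∧ D.dW i j m = u}.Nonempty :=
    ⟨m0.length, m0, rfl, h⟩
  exact Nat.sInf_mem hne

lemma eps_dW (i j : I) (m : List Bool) : eps (D.dW i j m) = (-1) ^ m.length := by
  unfold dW
  rw [D.eps_wp, List.length_map]

lemma eps_eq_pow_dlen {i j : I} {u : AddAut X} (m0 : List Bool) (h : D.dW i j m0 = u) :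
    eps u = (-1) ^ D.dlen i j u := by
  obtain ⟨m, hm, hdw⟩ := D.exists_min_bword m0 h
  rw [← hm, ← hdw, D.eps_dW]

lemma sX_span_i (i j : I) (x y : ℤ) :
    D.sX i (x • D.α i + y • D.α j) = (-x - D.A i j * y) • D.α i + y • D.α j := by
  rw [sX_apply, pr_addr, pr_smulr, pr_smulr, pr_av_a, pr_av_a, D.A_diag]
  match_scalars <;> ring

lemma sX_span_j (i j : I) (x y : ℤ) :
    D.sX j (x • D.α i + y • D.α j) = x • D.α i + (-y - D.A j i * x) • D.α j := by
  rw [sX_apply, pr_addr, pr_smulr, pr_smulr, pr_av_a, pr_av_a, D.A_diag]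
  match_scalars <;> ring

lemma dW_baw_alpha (i j : I) (k : ℕ) :
    D.dW i j (baw k) (D.α i) =
      (crd (D.A i j) (D.A j i) k).1 • D.α i + (crd (D.A i j) (D.A j i) k).2 • D.α j := by
  induction k with
  | zero =>
      show (1 : AddAut X) (D.α i) = _
      simp [crd]
  | succ k ih =>
    show D.dW i j (bletter k :: baw k) (D.α i) = _
    rw [dW_cons, AddAut.oldMul_apply, ih]
    by_cases hk : k % 2 = 0
    · have hb : bletter k = false := by simp [bletter]; omega
      rw [hb, bI_false, D.sX_span_j i j]
      simp [crd, hk]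
    · have hb : bletter k = true := by simp [bletter]; omega
      rw [hb, bI_true, D.sX_span_i i j]
      simp [crd, hk]

/-- affine-linear normal form of dihedral elements -/
def Tmap (i j : I) (M : Q4) (x : X) : X :=
  x + (M.1.1 * D.pr (D.αv i) x + M.1.2 * D.pr (D.αv j) x) • D.α i
    + (M.2.1 * D.pr (D.αv i) x + M.2.2 * D.pr (D.αv j) x) • D.α j

lemma pr_i_Tmap (i j : I) (M : Q4) (x : X) :
    D.pr (D.αv i) (D.Tmap i j M x) =
      D.pr (D.αv i) x + (M.1.1 * D.pr (D.αv i) x + M.1.2 * D.pr (D.αv j) x) * 2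
        + (M.2.1 * D.pr (D.αv i) x + M.2.2 * D.pr (D.αv j) x) * D.A i j := by
  unfold Tmap
  rw [pr_addr, pr_addr, pr_smulr, pr_smulr, pr_av_a, pr_av_a, D.A_diag]

lemma pr_j_Tmap (i j : I) (M : Q4) (x : X) :
    D.pr (D.αv j) (D.Tmap i j M x) =
      D.pr (D.αv j) x + (M.1.1 * D.pr (D.αv i) x + M.1.2 * D.pr (D.αv j) x) * D.A j i
        + (M.2.1 * D.pr (D.αv i) x + M.2.2 * D.pr (D.αv j) x) * 2 := by
  unfold Tmap
  rw [pr_addr, pr_addr, pr_smulr, pr_smulr, pr_av_a, pr_av_a, D.A_diag]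

lemma Tmap_comp (i j : I) (M N : Q4) (x : X) :
    D.Tmap i j M (D.Tmap i j N x) = D.Tmap i j (qcmp (D.A i j) (D.A j i) M N) x := by
  conv_lhs => rw [Tmap, D.pr_i_Tmap, D.pr_j_Tmap]
  unfold Tmap qcmp qmul
  simp only [Prod.fst_add, Prod.snd_add]
  match_scalars <;> ring

lemma sX_i_Tmap (i j : I) (x : X) : D.sX i x = D.Tmap i j (((-1,0)),((0,0))) x := by
  rw [sX_apply]
  unfold Tmap
  match_scalars <;> ring

lemma sX_j_Tmap (i j : I) (x : X) : D.sX j x = D.Tmap i j (((0,0)),((0,-1))) x := by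
  rw [sX_apply]
  unfold Tmap
  match_scalars <;> ring

lemma dW_Tmap (i j : I) (m : List Bool) (x : X) :
    D.dW i j m x = D.Tmap i j (Fm (D.A i j) (D.A j i) m) x := by
  induction m with
  | nil =>
      show x = _
      unfold Tmap Fm
      simp
  | cons t l ih =>
      rw [dW_cons, AddAut.oldMul_apply, ih]
      cases t
      · rw [bI_false, D.sX_j_Tmap i j, Tmap_comp]
        rfl
      · rw [bI_true, D.sX_i_Tmap i j, Tmap_comp]
        rfl

end KM


lemma bletter_not (k : ℕ) : Bool.not (bletter k) = bletter (k + 1) := by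
  rcases Nat.mod_two_eq_zero_or_one k with h | h <;>
    simp [bletter, h, Nat.add_mod] <;> omega

lemma baw_succ (k : ℕ) : baw (k + 1) = bletter k :: baw k := rfl

lemma baw_suffix {m k : ℕ} (h : m ≤ k) : (baw m) <:+ (baw k) := by
  induction k with
  | zero => rw [Nat.le_zero.mp h]
  | succ k ih =>
    rcases Nat.lt_or_ge m (k+1) with h' | h'
    · exact (ih (by omega)).trans ⟨[bletter k], rfl⟩
    · have : m = k + 1 := by omega
      rw [this]

lemma baw_concat {m : ℕ} (hm : 1 ≤ m) : ∃ pre : List Bool,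
    pre.length = m - 1 ∧ pre ++ [false] = baw m := by
  obtain ⟨pre, hpre⟩ := baw_suffix hm
  refine ⟨pre, ?_, hpre⟩
  have := congrArg List.length hpre
  simp [baw, bletter] at this
  omega

namespace KM

variable {I X Y : Type*} [Fintype I] [AddCommGroup X] [AddCommGroup Y] (D : KM I X Y)

open scoped Classical

lemma dW_single_true (i j : I) : D.dW i j [true] = D.sX i := by
  rw [show ([true] : List Bool) = true :: [] from rfl, dW_cons, dW_nil, bI_true, mul_one]

lemma dW_single_false (i j : I) : D.dW i j [false] = D.sX j := by
  rw [show ([false] : List Bool) = false :: [] from rfl, dW_cons, dW_nil, bI_false, mul_one]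

lemma dlen_mul_sX_ne {i j : I} (m0 : List Bool) (i' : I) (hi' : i' = i ∨ i' = j) :
    D.dlen i j (D.dW i j m0 * D.sX i') ≠ D.dlen i j (D.dW i j m0) := by
  intro h
  have hw : ∃ b : Bool, D.sX i' = D.dW i j [b] := by
    rcases hi' with h' | h'
    · exact ⟨true, by rw [h', D.dW_single_true]⟩
    · exact ⟨false, by rw [h', D.dW_single_false]⟩
  obtain ⟨bb, hbb⟩ := hw
  have h1 : D.dW i j (m0 ++ [bb]) = D.dW i j m0 * D.sX i' := by
    rw [dW_append, hbb]
  have e1 := D.eps_eq_pow_dlen _ h1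
  have e2 := D.eps_eq_pow_dlen (i := i) (j := j) m0 rfl
  rw [eps_mul, D.eps_sX, h, e2] at e1
  have h2 : ((-1 : ℤ)) ^ D.dlen i j (D.dW i j m0) ≠ 0 := pow_ne_zero _ (by norm_num)
  exact h2 (by linarith)

lemma dW_reduce (i j : I) : ∀ m : List Bool, ∃ m' : List Bool,
    List.Chain' (· ≠ ·) m' ∧ m'.length ≤ m.length ∧ D.dW i j m' = D.dW i j m := by
  intro m
  induction m with
  | nil => exact ⟨[], List.isChain_nil, le_refl _, rfl⟩
  | cons a t ih =>
    obtain ⟨t', hc, hl, hd⟩ := ih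
    cases t' with
    | nil =>
      refine ⟨[a], List.isChain_singleton a, by simp, ?_⟩
      rw [show ([a] : List Bool) = a :: [] from rfl, dW_cons, dW_cons, ← hd, dW_nil]
    | cons b t'' =>
      by_cases hab : a = b
      · refine ⟨t'', List.IsChain.tail hc, by simp at hl ⊢; omega, ?_⟩
        subst hab
        have : D.dW i j (a :: t) = D.sX (bI i j a) * D.dW i j t := D.dW_cons i j a t
        rw [this, ← hd, dW_cons, ← mul_assoc, sX_mul_self, one_mul]
      · refine ⟨a :: b :: t'', List.isChain_cons_cons.mpr ⟨hab, hc⟩, by simp at hl ⊢; omega, ?_⟩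
        rw [dW_cons, hd, ← dW_cons]

end KM

lemma chain_eq_baw : ∀ m : List Bool, List.Chain' (· ≠ ·) m →
    (∀ h : m ≠ [], m.getLast h = false) → m = baw m.length := by
  intro m
  induction m with
  | nil => intro _ _; rfl
  | cons a t ih =>
    intro hc hl
    cases t with
    | nil =>
      have ha : a = false := hl (by simp)
      subst ha
      simp [baw, bletter]
    | cons b t' =>
      have hc2 := List.isChain_cons_cons.mp hc
      have hback : (b :: t') = baw (b :: t').length := by
        refine ih hc2.2 ?_
        intro h
        have := hl (by simp)
        rwa [List.getLast_cons h] at this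
      have hb : b = bletter t'.length := by
        have := congrArg (fun l => l.headI) hback
        simpa [baw] using this
      have ha : a = bletter (t'.length + 1) := by
        have hne : a ≠ b := hc2.1
        rw [hb] at hne
        have hx : a = !(bletter t'.length) := by
          cases a <;> cases h' : bletter t'.length <;> simp_all
        rw [hx, bletter_not]
      have hlen : (a :: b :: t').length = t'.length + 1 + 1 := by simp
      rw [hlen, baw_succ, ← ha]
      exact congrArg (List.cons a) (by simpa using hback)


/-- invariant for the infinite dihedral case -/
lemma crd_nonneg_inf (A1 A2 : ℤ) (h1 : A1 ≤ 0) (h2 : A2 ≤ 0) (h4 : 4 ≤ A1 * A2) (k : ℕ) :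
    0 ≤ (crd A1 A2 k).1 ∧ 0 ≤ (crd A1 A2 k).2 := by
  have key : ∀ n, 0 ≤ (crd A1 A2 n).1 ∧ 0 ≤ (crd A1 A2 n).2 ∧
      (n % 2 = 0 → 0 ≤ 2 * (crd A1 A2 n).1 + A1 * (crd A1 A2 n).2) ∧
      (n % 2 = 1 → 0 ≤ 2 * (crd A1 A2 n).2 + A2 * (crd A1 A2 n).1) := by
    intro n
    induction n with
    | zero => refine ⟨by norm_num [crd], by norm_num [crd], by norm_num [crd], by omega⟩
    | succ n ih =>
      obtain ⟨hx, hy, he, ho⟩ := ih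
      rcases Nat.mod_two_eq_zero_or_one n with hn | hn
      · have hinv := he hn
        set x := (crd A1 A2 n).1 with hxdef
        set y := (crd A1 A2 n).2 with hydef
        have hc : crd A1 A2 (n+1) = (x, -y - A2 * x) := by rw [crd, if_pos hn]
        have hn1 : (n+1) % 2 = 1 := by omega
        have t1 : 0 ≤ (-A2) * (2*x + A1*y) := mul_nonneg (by linarith) hinv
        have t2 : 0 ≤ (A1*A2 - 4) * y := mul_nonneg (by linarith) hy
        rw [hc]
        refine ⟨hx, by dsimp only; nlinarith, fun h => absurd h (by omega), fun _ => ?_⟩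
        dsimp only
        nlinarith
      · have hinv := ho hn
        set x := (crd A1 A2 n).1 with hxdef
        set y := (crd A1 A2 n).2 with hydef
        have hc : crd A1 A2 (n+1) = (-x - A1 * y, y) := by rw [crd, if_neg (by omega)]
        have hn1 : (n+1) % 2 = 0 := by omega
        have t1 : 0 ≤ (-A1) * (2*y + A2*x) := mul_nonneg (by linarith) hinv
        have t2 : 0 ≤ (A1*A2 - 4) * x := mul_nonneg (by linarith) hx
        rw [hc]
        refine ⟨by dsimp only; nlinarith, hy, fun _ => ?_, fun h => absurd h (by omega)⟩
        dsimp only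
        nlinarith
  exact ⟨(key k).1, (key k).2.1⟩

namespace KM

variable {I X Y : Type*} [Fintype I] [AddCommGroup X] [AddCommGroup Y] (D : KM I X Y)

open scoped Classical

lemma braid_gen (i j : I) (a1 a2 : ℤ) (h1 : D.A i j = a1) (h2 : D.A j i = a2) (m : ℕ)
    (hF : Fm a1 a2 (baw m) = Fm a1 a2 ((baw m).map Bool.not)) :
    D.dW i j (baw m) = D.dW i j ((baw m).map Bool.not) := by
  ext x
  rw [dW_Tmap, dW_Tmap, h1, h2, hF]

/-- finite dihedral case: bound on the length -/
lemma rank2_fin (i j : I) (m : ℕ) (hm : 1 ≤ m)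
    (hbraid : D.dW i j (baw m) = D.dW i j ((baw m).map Bool.not))
    (k : ℕ) (hk : D.dlen i j (D.dW i j (baw k)) = k)
    (hk2 : k < D.dlen i j (D.dW i j (baw k) * D.sX i)) :
    k ≤ m - 1 := by
  obtain ⟨pre2, hpre2len, hpre2⟩ := baw_concat hm
  -- not-variant of baw m ends with true
  have hmapnot : ((baw m).map Bool.not) = (pre2.map Bool.not) ++ [true] := by
    rw [← hpre2, List.map_append]
    rfl
  by_contra hcon
  push_neg at hcon
  have hkm : m ≤ k := by omega
  rcases Nat.lt_or_ge k (m+1) with hk1 | hk1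
  · -- k = m
    have hkm' : k = m := by omega
    subst hkm'
    -- dW (baw k) * sX i = dW (pre2.map not)
    have : D.dW i j (baw k) * D.sX i = D.dW i j (pre2.map Bool.not) := by
      rw [hbraid, hmapnot, dW_append, dW_single_true, mul_assoc, sX_mul_self, mul_one]
    have hle := D.dlen_le this.symm
    rw [List.length_map] at hle
    omega
  · -- k ≥ m+1
    obtain ⟨pre, hpre⟩ := baw_suffix (show m + 1 ≤ k by omega)
    obtain ⟨m', hm'⟩ : ∃ m', m = m' + 1 := ⟨m - 1, by omega⟩
    -- dW (baw (m+1)) = dW ((baw m').map not)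
    have hstep : D.dW i j (baw (m+1)) = D.dW i j ((baw m').map Bool.not) := by
      rw [baw_succ, dW_cons, hbraid]
      have : (baw m).map Bool.not = bletter m :: ((baw m').map Bool.not) := by
        rw [hm', baw_succ, List.map_cons, bletter_not, ← hm']
      rw [this, dW_cons, ← mul_assoc, sX_mul_self, one_mul]
    have hsplit : D.dW i j (baw k) = D.dW i j (pre ++ (baw m').map Bool.not) := by
      rw [← hpre, dW_append, dW_append, hstep]
    have hle := D.dlen_le hsplit.symm
    have hprelen : pre.length + (m + 1) = k := by
      have := congrArg List.length hpre
      simpa using this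
    rw [List.length_append, List.length_map, baw_length] at hle
    omega

lemma rank2 (i j : I) (hij : i ≠ j) (k : ℕ)
    (hk : D.dlen i j (D.dW i j (baw k)) = k)
    (hk2 : k < D.dlen i j (D.dW i j (baw k) * D.sX i)) :
    0 ≤ (crd (D.A i j) (D.A j i) k).1 ∧ 0 ≤ (crd (D.A i j) (D.A j i) k).2 := by
  have hA1 : D.A i j ≤ 0 := D.A_offdiag i j hij
  have hA2 : D.A j i ≤ 0 := D.A_offdiag j i (Ne.symm hij)
  by_cases h4 : 4 ≤ D.A i j * D.A j i
  · exact crd_nonneg_inf _ _ hA1 hA2 h4 k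
  · push_neg at h4
    by_cases hz : D.A i j = 0
    · have hz2 : D.A j i = 0 := D.A_zero_iff i j hz
      have hb : D.dW i j (baw 2) = D.dW i j ((baw 2).map Bool.not) :=
        D.braid_gen i j 0 0 hz hz2 2 (by decide)
      have := D.rank2_fin i j 2 (by norm_num) hb k hk hk2
      rw [hz, hz2]
      interval_cases k <;> decide
    · have hz2 : D.A j i ≠ 0 := fun h => hz (D.A_zero_iff j i h)
      have hA1' : D.A i j ≤ -1 := by omega
      have hA2' : D.A j i ≤ -1 := by omega
      have hb1 : D.A i j ≥ -3 := by nlinarith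
      have hb2 : D.A j i ≥ -3 := by nlinarith
      interval_cases hAij : D.A i j <;> interval_cases hAji : D.A j i <;>
        first
        | (exfalso; nlinarith)
        | (have hb := D.braid_gen i j _ _ hAij hAji 3 (by decide)
           have := D.rank2_fin i j 3 (by norm_num) hb k hk hk2
           interval_cases k <;> decide)
        | (have hb := D.braid_gen i j _ _ hAij hAji 4 (by decide)
           have := D.rank2_fin i j 4 (by norm_num) hb k hk hk2
           interval_cases k <;> decide)
        | (have hb := D.braid_gen i j _ _ hAij hAji 6 (by decide)
           have := D.rank2_fin i j 6 (by norm_num) hb k hk hk2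
           interval_cases k <;> decide)

end KM


namespace KM

variable {I X Y : Type*} [Fintype I] [AddCommGroup X] [AddCommGroup Y] (D : KM I X Y)

open scoped Classical

lemma wp_concat (l : List I) (j : I) : D.wp (l ++ [j]) = D.wp l * D.sX j := by
  rw [wp_append, show ([j] : List I) = j :: [] from rfl, wp_cons, wp_nil, mul_one]

lemma sX_bI_eq_dW (i j : I) (bb : Bool) : D.sX (bI i j bb) = D.dW i j [bb] := by
  cases bb
  · rw [bI_false, D.dW_single_false]
  · rw [bI_true, D.dW_single_true]

lemma walk (i j : I) : ∀ n : ℕ, ∀ w : AddAut X, w ∈ D.Wg → D.wwl w = n →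
    (D.wwl (w * D.sX i) < n ∨ D.wwl (w * D.sX j) < n) →
    ∃ v : AddAut X, ∃ m : List Bool, v ∈ D.Wg ∧ w = v * D.dW i j m ∧
      D.wwl v + m.length = n ∧ D.wwl v < D.wwl (v * D.sX i) ∧
      D.wwl v < D.wwl (v * D.sX j) ∧ m ≠ [] := by
  intro n
  induction n using Nat.strong_induction_on with
  | _ n IH =>
    intro w hw hn hdec
    obtain ⟨bb, hb⟩ : ∃ bb : Bool, D.wwl (w * D.sX (bI i j bb)) < n := by
      rcases hdec with h | h
      · exact ⟨true, h⟩
      · exact ⟨false, h⟩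
    set r := bI i j bb with hrdef
    set w1 := w * D.sX r with hw1def
    have hw1mem : w1 ∈ D.Wg := mul_mem hw (D.sX_mem r)
    have hww : w = w1 * D.sX r := by rw [hw1def, mul_assoc, sX_mul_self, mul_one]
    have hge : D.wwl w ≤ D.wwl w1 + 1 := D.wwl_le_mul_sX hw r
    have hn1 : D.wwl w1 = n - 1 := by omega
    have hnpos : 1 ≤ n := by omega
    have tri : ∀ t : I, D.wwl (w1 * D.sX t) < D.wwl w1 ∨ D.wwl w1 < D.wwl (w1 * D.sX t) := by
      intro t
      have := D.wwl_mul_sX_ne hw1mem t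
      omega
    by_cases hstop : D.wwl w1 < D.wwl (w1 * D.sX i) ∧ D.wwl w1 < D.wwl (w1 * D.sX j)
    · refine ⟨w1, [bb], hw1mem, ?_, ?_, hstop.1, hstop.2, by simp⟩
      · rw [hww, D.sX_bI_eq_dW i j bb]
      · simp only [List.length_cons, List.length_nil]
        omega
    · have hdec1 : D.wwl (w1 * D.sX i) < D.wwl w1 ∨ D.wwl (w1 * D.sX j) < D.wwl w1 := by
        rcases tri i with h | h
        · exact Or.inl h
        · rcases tri j with h' | h'
          · exact Or.inr h'
          · exact absurd ⟨h, h'⟩ hstop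
      rw [hn1] at hdec1
      obtain ⟨v, m, hv, hsplit, hlen, hvi, hvj, hmne⟩ :=
        IH (n - 1) (by omega) w1 hw1mem hn1 hdec1
      refine ⟨v, m ++ [bb], hv, ?_, ?_, hvi, hvj, by simp⟩
      · rw [hww, hsplit, D.sX_bI_eq_dW i j bb, mul_assoc, ← dW_append]
      · simp only [List.length_append, List.length_cons, List.length_nil]
        omega


theorem rootPos : ∀ n : ℕ, ∀ w ∈ D.Wg, ∀ i : I, D.wwl w = n →
    n < D.wwl (w * D.sX i) → w (D.α i) ∈ D.PhiPos := by
  intro n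
  induction n using Nat.strong_induction_on with
  | _ n IH =>
    intro w hw i hn hgt
    rcases Nat.eq_zero_or_pos n with h0 | hpos
    · have hw1 : w = 1 := D.eq_one_of_wwl_eq_zero hw (by omega)
      subst hw1
      simpa using D.alpha_mem_PhiPos i
    · obtain ⟨l, hlenl, hwp⟩ := D.exists_min_word hw
      have hlne : l ≠ [] := by
        intro h
        rw [h] at hlenl
        simp at hlenl
        omega
      rcases l.eq_nil_or_concat with h | ⟨l0, j, hl0⟩
      · exact absurd h hlne
      · rw [List.concat_eq_append] at hl0
        have hdecj : D.wwl (w * D.sX j) < n := by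
          have hwj : w * D.sX j = D.wp l0 := by
            rw [← hwp, hl0, wp_concat, mul_assoc, sX_mul_self, mul_one]
          have h1 := D.wwl_le hwj.symm
          have h2 : l0.length + 1 = n := by
            have := congrArg List.length hl0
            simp at this
            omega
          omega
        have hij : i ≠ j := by
          rintro rfl
          omega
        obtain ⟨v, m, hv, hsplit, hlen2, hvi, hvj, hmne⟩ :=
          D.walk i j n w hw hn (Or.inr hdecj)
        set u := D.dW i j m with hudef
        set k := m.length with hkdef
        have hk1 : 1 ≤ k := List.length_pos_iff.mpr hmne
        have hwle : D.wwl v = n - k := by omega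
        have hdlenle : D.dlen i j u ≤ k := D.dlen_le rfl
        obtain ⟨m1, hm1len, hm1⟩ := D.exists_min_bword (i := i) (j := j) (u := u) m rfl
        have hwub : n ≤ D.wwl v + D.dlen i j u := by
          obtain ⟨lv, hlvlen, hlv⟩ := D.exists_min_word hv
          have hwrd : D.wp (lv ++ m1.map (bI i j)) = w := by
            rw [wp_append, hlv, hsplit]
            exact congrArg (fun z => v * z) hm1
          have h3 := D.wwl_le hwrd
          rw [List.length_append, List.length_map] at h3
          omega
        have hdlen : D.dlen i j u = k := by omega
        have hdleni : k < D.dlen i j (u * D.sX i) := by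
          have hne : D.dlen i j (u * D.sX i) ≠ D.dlen i j u :=
            D.dlen_mul_sX_ne (i := i) (j := j) m i (Or.inl rfl)
          have hnotlt : ¬ (D.dlen i j (u * D.sX i) < k) := by
            intro hlt
            obtain ⟨m2, hm2len, hm2⟩ := D.exists_min_bword (i := i) (j := j)
              (u := u * D.sX i) (m ++ [true])
              (by rw [dW_append, dW_single_true])
            obtain ⟨lv, hlvlen, hlv⟩ := D.exists_min_word hv
            have hwrd : D.wp (lv ++ m2.map (bI i j)) = w * D.sX i := by
              rw [wp_append, hlv]
              have : D.wp (m2.map (bI i j)) = D.dW i j m2 := rfl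
              rw [this, hm2, hsplit, mul_assoc]
            have h3 := D.wwl_le hwrd
            rw [List.length_append, List.length_map] at h3
            omega
          omega
        obtain ⟨m2, hchain, hm2len, hm2⟩ := D.dW_reduce i j m1
        have hm2len' : m2.length = k := by
          have hd1 : D.dlen i j u ≤ m2.length := D.dlen_le (by rw [hm2, hm1])
          omega
        have hlast : ∀ h : m2 ≠ [], m2.getLast h = false := by
          intro h
          by_contra hT
          have hTt : m2.getLast h = true := by
            cases hg : m2.getLast h
            · exact absurd hg hT
            · rfl
          have hsplit2 : m2.dropLast ++ [true] = m2 := by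
            rw [← hTt]
            exact List.dropLast_append_getLast h
          have husx : u * D.sX i = D.dW i j m2.dropLast := by
            have : u = D.dW i j (m2.dropLast ++ [true]) := by rw [hsplit2, hm2, hm1]
            rw [this, dW_append, dW_single_true, mul_assoc, sX_mul_self, mul_one]
          have h4 := D.dlen_le husx.symm
          have h5 : m2.dropLast.length = k - 1 := by
            rw [List.length_dropLast, hm2len']
          omega
        have hm2baw : m2 = baw k := by
          rw [← hm2len']
          exact chain_eq_baw m2 hchain hlast
        have hu : u = D.dW i j (baw k) := by rw [← hm1, ← hm2, hm2baw]
        have hcrd := D.rank2 i j hij k (by rw [← hu, hdlen]) (by rw [← hu]; exact hdleni)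
        have hualpha : u (D.α i) = (crd (D.A i j) (D.A j i) k).1 • D.α i +
            (crd (D.A i j) (D.A j i) k).2 • D.α j := by
          rw [hu]
          exact D.dW_baw_alpha i j k
        have hvl : D.wwl v < n := by omega
        have hvipos := IH (D.wwl v) hvl v hv i rfl hvi
        have hvjpos := IH (D.wwl v) hvl v hv j rfl hvj
        obtain ⟨hviPhi, c, hcn, hcv⟩ := D.mem_PhiPos_iff.mp hvipos
        obtain ⟨hvjPhi, d, hdn, hdv⟩ := D.mem_PhiPos_iff.mp hvjpos
        set s1 := (crd (D.A i j) (D.A j i) k).1 with hs1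
        set s2 := (crd (D.A i j) (D.A j i) k).2 with hs2
        refine D.mem_PhiPos_iff.mpr ⟨D.mem_Phi_iff.mpr ⟨w, hw, i, rfl⟩,
          fun t => s1 * c t + s2 * d t,
          fun t => add_nonneg (mul_nonneg hcrd.1 (hcn t)) (mul_nonneg hcrd.2 (hdn t)), ?_⟩
        have hwva : w (D.α i) = v (u (D.α i)) := by
          rw [hsplit, AddAut.oldMul_apply]
        rw [hwva, hualpha, map_add, map_zsmul, map_zsmul, hcv, hdv,
          Finset.smul_sum, Finset.smul_sum, ← Finset.sum_add_distrib]
        refine Finset.sum_congr rfl fun t _ => ?_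
        rw [smul_smul, smul_smul, ← add_smul]

lemma walpha_dichotomy {w : AddAut X} (hw : w ∈ D.Wg) (i : I) :
    w (D.α i) ∈ D.PhiPos ∨ w (D.α i) ∈ D.PhiNeg := by
  have hne := D.wwl_mul_sX_ne hw i
  rcases Nat.lt_or_ge (D.wwl w) (D.wwl (w * D.sX i)) with h | h
  · exact Or.inl (D.rootPos (D.wwl w) w hw i rfl h)
  · right
    set w' := w * D.sX i with hw'def
    have hw'mem : w' ∈ D.Wg := mul_mem hw (D.sX_mem i)
    have hwi : w = w' * D.sX i := by rw [hw'def, mul_assoc, sX_mul_self, mul_one]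
    have hlt : D.wwl w' < D.wwl w := by omega
    have h2 : D.wwl w' < D.wwl (w' * D.sX i) := by rw [← hwi]; omega
    have hpos := D.rootPos (D.wwl w') w' hw'mem i rfl h2
    have : w (D.α i) = -(w' (D.α i)) := by
      rw [hwi, AddAut.oldMul_apply, D.sX_alpha_self, map_neg]
    rw [mem_PhiNeg_iff, this, neg_neg]
    exact hpos

lemma phi_dichotomy {x : X} (hx : x ∈ D.Phi) : x ∈ D.PhiPos ∨ x ∈ D.PhiNeg := by
  obtain ⟨w, hw, t, rfl⟩ := D.mem_Phi_iff.mp hx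
  exact D.walpha_dichotomy hw t

end KM


namespace KM

variable {I X Y : Type*} [Fintype I] [AddCommGroup X] [AddCommGroup Y] (D : KM I X Y)

open scoped Classical

lemma pos_sX_neg_eq_alpha {x : X} {t : I} (hx : x ∈ D.PhiPos)
    (hneg : D.sX t x ∈ D.PhiNeg) : x = D.α t := by
  obtain ⟨hxPhi, c, hc, hxc⟩ := D.mem_PhiPos_iff.mp hx
  set pval := D.pr (D.αv t) x with hp
  have hsx : D.sX t x = ∑ s, (c s - (if s = t then pval else 0)) • D.α s := by
    rw [sX_apply, ← hp]
    conv_lhs => rw [hxc]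
    have hite : ∑ s, (if s = t then pval else 0) • D.α s = pval • D.α t := by
      simp [ite_smul]
    conv_rhs => simp only [sub_smul]
    rw [Finset.sum_sub_distrib, hite]
  obtain ⟨hnPhi, e, he, hne⟩ := D.mem_PhiPos_iff.mp (D.mem_PhiNeg_iff.mp hneg)
  have hsx2 : D.sX t x = ∑ s, (-(e s)) • D.α s := by
    have := congrArg Neg.neg hne
    rw [neg_neg] at this
    rw [this, ← Finset.sum_neg_distrib]
    exact Finset.sum_congr rfl fun s _ => (neg_smul _ _).symm
  have hcoef := D.coeff_eq (hsx.symm.trans hsx2)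
  have hcs : ∀ s, s ≠ t → c s = 0 := by
    intro s hs
    have h1 := congrFun hcoef s
    simp only [if_neg hs, sub_zero] at h1
    have := hc s
    have := he s
    omega
  have hxt : x = c t • D.α t := by
    rw [hxc, Finset.sum_eq_single t (fun s _ hs => by rw [hcs s hs, zero_smul])
      (fun h => absurd (Finset.mem_univ t) h)]
  obtain ⟨w, hwW, t0, hxw⟩ := D.mem_Phi_iff.mp hxPhi
  have hwinv : D.α t0 = c t • (w⁻¹ (D.α t)) := by
    have h2 : w⁻¹ x = D.α t0 := by rw [hxw, AddAut.oldApply_inv_self]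
    rw [← h2, hxt, map_zsmul]
  obtain ⟨d, hd⟩ := D.Phi_coords (D.Phi_w (inv_mem hwW) (D.alpha_mem_Phi t))
  have h1 : ∑ s, (if s = t0 then (1:ℤ) else 0) • D.α s = ∑ s, (c t * d s) • D.α s := by
    have hl : ∑ s, (if s = t0 then (1:ℤ) else 0) • D.α s = D.α t0 := by simp [ite_smul]
    rw [hl, hwinv, hd, Finset.smul_sum]
    exact Finset.sum_congr rfl fun s _ => smul_smul _ _ _
  have hcoef2 := D.coeff_eq h1
  have h2 := congrFun hcoef2 t0
  simp only [if_pos rfl] at h2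
  have hct1 : c t = 1 := by
    have hunit := IsUnit.of_mul_eq_one (d t0) h2.symm
    rcases Int.isUnit_iff.mp hunit with h | h
    · exact h
    · have := hc t; omega
  rw [hxt, hct1, one_smul]

lemma sX_pos_of_ne {x : X} {t : I} (hx : x ∈ D.PhiPos) (hne : x ≠ D.α t) :
    D.sX t x ∈ D.PhiPos := by
  have hPhi : D.sX t x ∈ D.Phi := D.Phi_w (D.sX_mem t) hx.1
  rcases D.phi_dichotomy hPhi with h | h
  · exact h
  · exact absurd (D.pos_sX_neg_eq_alpha hx h) hne

lemma invSet_wp_finite (l : List I) : (D.invSet (D.wp l)).Finite := by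
  induction l with
  | nil =>
    have : D.invSet (D.wp []) = ∅ := by
      ext a
      simp only [Set.mem_empty_iff_false, iff_false]
      rintro ⟨h1, h2⟩
      exact D.not_pos_and_neg h1 (by simpa using h2)
    rw [this]
    exact Set.finite_empty
  | cons t l ih =>
    rw [wp_cons]
    apply Set.Finite.subset (ih.union (Set.finite_singleton ((D.wp l)⁻¹ (D.α t))))
    rintro a ⟨ha, hneg⟩
    rw [AddAut.oldMul_apply] at hneg
    by_cases hcase : (D.wp l) a ∈ D.PhiNeg
    · exact Or.inl ⟨ha, hcase⟩
    · right
      have hPhi : (D.wp l) a ∈ D.Phi := D.Phi_w (D.wp_mem l) ha.1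
      have hpos : (D.wp l) a ∈ D.PhiPos := (D.phi_dichotomy hPhi).resolve_right hcase
      have heq : (D.wp l) a = D.α t := D.pos_sX_neg_eq_alpha hpos hneg
      have : a = (D.wp l)⁻¹ (D.α t) := by rw [← heq, AddAut.oldApply_inv_self]
      simpa using this

lemma invSet_finite {w : AddAut X} (hw : w ∈ D.Wg) : (D.invSet w).Finite := by
  obtain ⟨l, hl⟩ := D.mem_Wg_iff.mp hw
  rw [← hl]
  exact D.invSet_wp_finite l

lemma actY_pr (f : AddAut X) (y : Y) (x : X) : D.pr (D.actY f y) x = D.pr y (f⁻¹ x) := by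
  unfold actY pr
  rw [AddEquiv.apply_symm_apply]
  rfl

end KM


namespace KM

variable {I X Y : Type*} [Fintype I] [AddCommGroup X] [AddCommGroup Y] (D : KM I X Y)

open scoped Classical

lemma coroot_srefl_spec {b : X} (hb : b ∈ D.Phi) :
    ∃ w : AddAut X, ∃ t : I, w ∈ D.Wg ∧ b = w (D.α t) ∧
      D.coroot b = D.actY w (D.αv t) ∧ D.srefl b = w * D.sX t * w⁻¹ := by
  have h : ∃ p : AddAut X × I, p.1 ∈ D.Wg ∧ b = p.1 (D.α p.2) := hb
  refine ⟨h.choose.1, h.choose.2, h.choose_spec.1, h.choose_spec.2, ?_, ?_⟩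
  · unfold coroot
    rw [dif_pos h]
  · unfold srefl
    rw [dif_pos h]

lemma srefl_mem {b : X} (hb : b ∈ D.Phi) : D.srefl b ∈ D.Wg := by
  obtain ⟨w, t, hw, _, _, hsr⟩ := D.coroot_srefl_spec hb
  rw [hsr]
  exact mul_mem (mul_mem hw (D.sX_mem t)) (inv_mem hw)

lemma srefl_apply {b : X} (hb : b ∈ D.Phi) (x : X) :
    D.srefl b x = x - D.pr (D.coroot b) x • b := by
  obtain ⟨w, t, hw, hbw, hcor, hsr⟩ := D.coroot_srefl_spec hb
  rw [hsr, hcor, AddAut.oldMul_apply, AddAut.oldMul_apply, sX_apply, map_sub, map_zsmul,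
    AddAut.oldInv_apply_self, D.actY_pr, hbw]

lemma inv_srefl_pos {b : X} (hb : b ∈ D.PhiPos) {g : X} (hg : g ∈ D.invSet (D.srefl b)) :
    0 < D.pr (D.coroot b) g := by
  obtain ⟨hgpos, hgneg⟩ := hg
  set cval := D.pr (D.coroot b) g with hcval
  have hsg : D.srefl b g = g - cval • b := D.srefl_apply hb.1 g
  obtain ⟨_, cg, hcg, hgc⟩ := D.mem_PhiPos_iff.mp hgpos
  obtain ⟨_, cb, hcb, hbc⟩ := D.mem_PhiPos_iff.mp hb
  obtain ⟨_, cn, hcn, hnc⟩ := D.mem_PhiPos_iff.mp (D.mem_PhiNeg_iff.mp hgneg)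
  have l1 : ∑ s, (cg s - cval * cb s) • D.α s = g - cval • b := by
    conv_rhs => rw [hgc, hbc, Finset.smul_sum]
    rw [← Finset.sum_sub_distrib]
    refine Finset.sum_congr rfl fun s _ => ?_
    rw [sub_smul, smul_smul]
  have l2 : g - cval • b = ∑ s, (-(cn s)) • D.α s := by
    have h5 : D.srefl b g = -∑ s, (cn s) • D.α s := by rw [← hnc, neg_neg]
    rw [← hsg, h5, ← Finset.sum_neg_distrib]
    exact Finset.sum_congr rfl fun s _ => (neg_smul _ _).symm
  have hco := D.coeff_eq (l1.trans l2)
  have hbne : b ≠ 0 := fun h => D.zero_not_mem_Phi (h ▸ hb.1)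
  have hcexists : ∃ s, 0 < cb s := by
    by_contra hno
    push_neg at hno
    apply hbne
    rw [hbc]
    exact Finset.sum_eq_zero fun s _ =>
      by rw [le_antisymm (hno s) (hcb s), zero_smul]
  obtain ⟨s0, hs0⟩ := hcexists
  have h1 := congrFun hco s0
  have hge : 0 ≤ cval := by nlinarith [hcg s0, hcn s0]
  have hne0 : cval ≠ 0 := by
    intro h0
    apply D.not_pos_and_neg hgpos
    have h6 : D.srefl b g = g := by rw [hsg, h0, zero_smul, sub_zero]
    exact h6 ▸ hgneg
  omega

end KM

/-- if `λ ∈ Y^{++}`, `β^∨` is a positive coroot and `λ+β^∨` lies in the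
vectorial chamber of `u` (i.e. `u⁻¹(λ+β^∨) ∈ Y^{++}`), then `ℓ(s_β u) = ℓ(s_β) + ℓ(u)`. -/
theorem statement4 {I X Y : Type*} [Fintype I] [AddCommGroup X] [AddCommGroup Y]
    (D : KM I X Y)
    (lam : Y) (hlam : lam ∈ D.Ypp) (b : X) (hb : b ∈ D.PhiPos)
    (u : AddAut X) (hu : u ∈ D.Wg)
    (hch : D.actY (u⁻¹) (lam + D.coroot b) ∈ D.Ypp) :
    D.len (D.srefl b * u) = D.len (D.srefl b) + D.len u := by
  classical
  have hbPhi : b ∈ D.Phi := hb.1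
  have hsb_mem := D.srefl_mem hbPhi
  have key2 : ∀ g, g ∈ D.invSet u⁻¹ → g ∈ D.invSet (D.srefl b) → False := by
    intro g hgu hgs
    have h1 : 0 ≤ D.pr lam g := D.pr_nonneg_of_pos hlam hgu.1
    have h2 : 0 < D.pr (D.coroot b) g := D.inv_srefl_pos hb hgs
    have h3 : D.pr (D.actY u⁻¹ (lam + D.coroot b)) (u⁻¹ g) = D.pr (lam + D.coroot b) g := by
      rw [D.actY_pr, inv_inv, AddAut.oldInv_apply_self]
    have h4 : D.pr (D.actY u⁻¹ (lam + D.coroot b)) (u⁻¹ g) ≤ 0 :=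
      D.pr_nonpos_of_neg hch hgu.2
    rw [h3, D.pr_addl] at h4
    linarith
  have hdecomp : D.invSet (D.srefl b * u) =
      D.invSet u ∪ ((fun x => u⁻¹ x) '' D.invSet (D.srefl b)) := by
    ext a
    constructor
    · rintro ⟨ha, hneg⟩
      rw [AddAut.oldMul_apply] at hneg
      rcases D.phi_dichotomy (D.Phi_w hu ha.1) with hpos | hneg2
      · right
        exact ⟨u a, ⟨hpos, hneg⟩, by show u⁻¹ (u a) = a; rw [AddAut.oldApply_inv_self]⟩
      · exact Or.inl ⟨ha, hneg2⟩
    · rintro (⟨ha, hneg⟩ | ⟨g, ⟨hg1, hg2⟩, rfl⟩)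
      · refine ⟨ha, ?_⟩
        rw [AddAut.oldMul_apply]
        by_contra hcon
        have hPhi2 : D.srefl b (u a) ∈ D.Phi := D.Phi_w hsb_mem (D.Phi_w hu ha.1)
        have hpos2 : D.srefl b (u a) ∈ D.PhiPos := (D.phi_dichotomy hPhi2).resolve_right hcon
        have hgamma_pos : -(u a) ∈ D.PhiPos := D.mem_PhiNeg_iff.mp hneg
        have hgu : -(u a) ∈ D.invSet u⁻¹ := by
          refine ⟨hgamma_pos, ?_⟩
          rw [map_neg, AddAut.oldApply_inv_self, D.mem_PhiNeg_iff, neg_neg]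
          exact ha
        have hgs : -(u a) ∈ D.invSet (D.srefl b) := by
          refine ⟨hgamma_pos, ?_⟩
          rw [map_neg, D.mem_PhiNeg_iff, neg_neg]
          exact hpos2
        exact key2 _ hgu hgs
      · have hgpos : u⁻¹ g ∈ D.PhiPos := by
          have hPhi2 : u⁻¹ g ∈ D.Phi := D.Phi_w (inv_mem hu) hg1.1
          rcases D.phi_dichotomy hPhi2 with h | h
          · exact h
          · exact absurd (show g ∈ D.invSet u⁻¹ from ⟨hg1, h⟩)
              (fun hh => key2 g hh ⟨hg1, hg2⟩)
        refine ⟨hgpos, ?_⟩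
        rw [AddAut.oldMul_apply, AddAut.oldInv_apply_self]
        exact hg2
  have hdisj : Disjoint (D.invSet u) ((fun x => u⁻¹ x) '' D.invSet (D.srefl b)) := by
    rw [Set.disjoint_left]
    rintro a ⟨ha, haneg⟩ ⟨g, ⟨hg1, hg2⟩, rfl⟩
    apply D.not_pos_and_neg hg1
    rw [AddAut.oldInv_apply_self] at haneg
    exact haneg
  unfold KM.len
  rw [hdecomp, Set.ncard_union_eq hdisj (D.invSet_finite hu)
    ((D.invSet_finite hsb_mem).image _),
    Set.ncard_image_of_injective _ u⁻¹.injective]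
  omega
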